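/- Let T be a tree with distance d, and suppose every leaf i has a unique neighbor p(i) (its parent) with the parents belonging to a set V_z. Then for any two leaves i != j, exp(-d(i,j)) = theta_i * B_{p(i),p(j)} * theta_j, where theta_i = exp(-d(i, p(i))) and B_{u,v} = exp(-d(u,v)) for u, v in V_z. -/

import Mathlib

open SimpleGraph

/-- The unique path between two vertices of a tree. -/
noncomputable def treePath {V : Type*} (G : SimpleGraph V) (hG : G.IsTree) (u v : V) :
    G.Walk u v :=
  (hG.existsUnique_path u v).exists.choose

/-- The weighted path distance in a tree. -/
noncomputable def treeDist {V : Type*} (G : SimpleGraph V) (hG : G.IsTree)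
    (w : Sym2 V → ℝ) (u v : V) : ℝ :=
  ((treePath G hG u v).edges.map w).sum

lemma treePath_isPath {V : Type*} (G : SimpleGraph V) (hG : G.IsTree) (u v : V) :
    (treePath G hG u v).IsPath :=
  (hG.existsUnique_path u v).exists.choose_spec

lemma treeDist_eq {V : Type*} (G : SimpleGraph V) (hG : G.IsTree) (w : Sym2 V → ℝ)
    {u v : V} (q : G.Walk u v) (hq : q.IsPath) :
    treeDist G hG w u v = (q.edges.map w).sum := by
  have : treePath G hG u v = q :=
    (hG.existsUnique_path u v).unique (treePath_isPath G hG u v) hq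
  rw [treeDist, this]

lemma leaf_not_mem_support {V : Type*} {G : SimpleGraph V} {x px : V}
    (hnb : ∀ y, G.Adj x y → y = px) :
    ∀ {u v : V} (q : G.Walk u v), q.IsPath → x ≠ u → x ≠ v → x ∉ q.support := by
  intro u v q
  induction q with
  | nil => intro _ hxu _ h; simp at h; exact hxu h
  | @cons u u' v h q' ih =>
    intro hp hxu hxv hmem
    rw [SimpleGraph.Walk.support_cons, List.mem_cons] at hmem
    rcases hmem with h1 | h1
    · exact hxu h1
    rcases (SimpleGraph.Walk.cons_isPath_iff h q').mp hp with ⟨hq', hus⟩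
    by_cases hx : x = u'
    · subst hx
      -- q' is a path from x to v, x ≠ v, so q' nonnil
      cases q' with
      | nil => exact hxv rfl
      | @cons _ z _ h2 q'' =>
        have hz : z = px := hnb z h2
        have hu : u = px := hnb u h.symm
        apply hus
        rw [SimpleGraph.Walk.support_cons, List.mem_cons]
        right
        rw [hu, ← hz]
        exact SimpleGraph.Walk.start_mem_support q''
    · exact ih hq' hx hxv h1

lemma leaf_ne_of_degree {V : Type*} [Fintype V] (G : SimpleGraph V) [DecidableRel G.Adj]
    {x y : V} (hx : G.degree x = 1) (hy : 1 < G.degree y) : x ≠ y := by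
  intro h; subst h; omega

lemma degree_one_unique_nbr {V : Type*} [Fintype V] (G : SimpleGraph V) [DecidableRel G.Adj]
    {x px : V} (hx : G.degree x = 1) (hadj : G.Adj x px) :
    ∀ y, G.Adj x y → y = px := by
  intro y hy
  have h1 : px ∈ G.neighborFinset x := by simpa using hadj
  have h2 : y ∈ G.neighborFinset x := by simpa using hy
  exact Finset.card_le_one.mp (le_of_eq hx) _ h2 _ h1

/-- T-Stochastic Graphs are DCSBMs: in a tree with distance `d`, if `i ≠ j`
are leaves with respective (internal) parents `pi` and `pj`, then
`exp(-d(i,j)) = θ_i * B_{pi,pj} * θ_j` with `θ_x = exp(-d(x, p(x)))` and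
`B_{u,v} = exp(-d(u,v))`. -/
theorem tsg_is_dcsbm {V : Type*} [Fintype V] [DecidableEq V]
    (G : SimpleGraph V) [DecidableRel G.Adj] (hG : G.IsTree) (w : Sym2 V → ℝ)
    (i j pi pj : V) (hij : i ≠ j)
    (hi : G.degree i = 1) (hj : G.degree j = 1)
    (hadj_i : G.Adj i pi) (hadj_j : G.Adj j pj)
    (hpi : 1 < G.degree pi) (hpj : 1 < G.degree pj) :
    Real.exp (-(treeDist G hG w i j)) =
      Real.exp (-(treeDist G hG w i pi)) * Real.exp (-(treeDist G hG w pi pj)) *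
        Real.exp (-(treeDist G hG w pj j)) := by
  have hni := degree_one_unique_nbr G hi hadj_i
  have hnj := degree_one_unique_nbr G hj hadj_j
  have hipi : i ≠ pi := hadj_i.ne
  have hjpj : j ≠ pj := hadj_j.ne
  have hipj : i ≠ pj := leaf_ne_of_degree G hi hpj
  have hjpi : j ≠ pi := leaf_ne_of_degree G hj hpi
  set P := treePath G hG pi pj with hP
  have hPpath : P.IsPath := treePath_isPath G hG pi pj
  have hjP : j ∉ P.support := leaf_not_mem_support hnj P hPpath hjpi hjpj
  have hiP : i ∉ P.support := leaf_not_mem_support hni P hPpath hipi hipj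
  -- build walk i → pi →...→ pj → j
  set W2 : G.Walk pi j := P.append (SimpleGraph.Walk.cons hadj_j.symm SimpleGraph.Walk.nil)
    with hW2
  have hW2supp : W2.support = P.support ++ [j] := by
    rw [hW2, SimpleGraph.Walk.support_append]; simp
  have hW2path : W2.IsPath := by
    rw [SimpleGraph.Walk.isPath_def, hW2supp, List.nodup_append]
    refine ⟨hPpath.support_nodup, List.nodup_singleton j, ?_⟩
    intro a ha b hb hab
    simp at hb; subst hb; subst hab; exact hjP ha
  have hiW2 : i ∉ W2.support := by
    rw [hW2supp, List.mem_append]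
    rintro (h | h)
    · exact hiP h
    · simp at h; exact hij h
  have hWpath : (SimpleGraph.Walk.cons hadj_i W2).IsPath :=
    (SimpleGraph.Walk.cons_isPath_iff hadj_i W2).mpr ⟨hW2path, hiW2⟩
  have h1 : treeDist G hG w i j = ((SimpleGraph.Walk.cons hadj_i W2).edges.map w).sum :=
    treeDist_eq G hG w _ hWpath
  have h2 : treeDist G hG w i pi = w s(i, pi) := by
    have := treeDist_eq G hG w (SimpleGraph.Walk.cons hadj_i SimpleGraph.Walk.nil)
      (by simp [SimpleGraph.Walk.cons_isPath_iff, hipi])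
    simpa using this
  have h3 : treeDist G hG w pj j = w s(pj, j) := by
    have := treeDist_eq G hG w (SimpleGraph.Walk.cons hadj_j.symm SimpleGraph.Walk.nil)
      (by simp [SimpleGraph.Walk.cons_isPath_iff, hjpj.symm])
    simpa using this
  have h4 : treeDist G hG w pi pj = (P.edges.map w).sum := by rw [treeDist, hP]
  have hedges : (SimpleGraph.Walk.cons hadj_i W2).edges
      = s(i, pi) :: (P.edges ++ [s(pj, j)]) := by
    rw [SimpleGraph.Walk.edges_cons, hW2, SimpleGraph.Walk.edges_append]
    simp [Sym2.eq_swap]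
  rw [h1, hedges, h2, h3, h4]
  simp [List.map_append, ← Real.exp_add]
  ring_nf
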